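/- Let A and B be real symmetric n×n matrices such that every row of A and every row of B is a probability vector, and every entry of B is strictly positive. For a real symmetric matrix M let λ_1(M) ≥ … ≥ λ_n(M) denote its eigenvalues listed in decreasing order with multiplicity. Then max_i |λ_i(A) − λ_i(B)| ≤ ‖A − B‖_F ≤ sqrt(2 · Σ_{i=1}^{n} KL(A_i ‖ B_i)), where A_i, B_i are the i-th rows and KL(p‖q) = Σ_j p_j log(p_j/q_j) with the convention 0·log 0 = 0. -/

import Mathlib

open Matrix

/-- The Frobenius norm of a real matrix: `‖M‖_F = (Σ_{i,j} M_{ij}²)^{1/2}`. -/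
noncomputable def frobNorm {m n : ℕ} (M : Matrix (Fin m) (Fin n) ℝ) : ℝ :=
  Real.sqrt (∑ i, ∑ j, (M i j) ^ 2)

/-- `μ` enumerates the eigenvalues of the Hermitian (real symmetric) matrix `A`
in decreasing order with multiplicity. -/
def IsDecreasingEigenvalueSeq {n : ℕ} {A : Matrix (Fin n) (Fin n) ℝ}
    (hA : A.IsHermitian) (μ : Fin n → ℝ) : Prop :=
  Antitone μ ∧ ∃ e : Equiv.Perm (Fin n), μ = hA.eigenvalues ∘ e

/-! ### Auxiliary scalar inequalities (towards Pinsker) -/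

lemma log_le_half_sub_inv {t : ℝ} (ht : 1 ≤ t) : Real.log t ≤ (t - t⁻¹)/2 := by
  have key : MonotoneOn (fun y : ℝ => (y - y⁻¹)/2 - Real.log y) (Set.Ici 1) := by
    have hd : ∀ x : ℝ, 0 < x → HasDerivAt (fun y : ℝ => (y - y⁻¹)/2 - Real.log y)
        ((1 - -(x^2)⁻¹)/2 - x⁻¹) x := fun x hx =>
      (((hasDerivAt_id x).sub (hasDerivAt_inv hx.ne')).div_const 2).sub
        (Real.hasDerivAt_log hx.ne')
    apply monotoneOn_of_deriv_nonneg (convex_Ici 1)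
    · intro x hx
      exact ((hd x (lt_of_lt_of_le one_pos hx)).continuousAt).continuousWithinAt
    · rw [interior_Ici]
      intro x hx
      exact ((hd x (lt_trans one_pos hx)).differentiableAt).differentiableWithinAt
    · rw [interior_Ici]
      intro x hx
      have hx0 : (0:ℝ) < x := lt_trans one_pos hx
      rw [(hd x hx0).deriv]
      have h2 : (x^2)⁻¹ = x⁻¹ * x⁻¹ := by rw [sq, mul_inv]
      nlinarith [sq_nonneg (1 - x⁻¹)]
  have h := key (Set.self_mem_Ici) (Set.mem_Ici.mpr ht) ht
  simp only [Real.log_one, inv_one] at h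
  linarith

lemma two_mul_div_le_log {t : ℝ} (ht : 1 ≤ t) : 2*(t-1)/(t+1) ≤ Real.log t := by
  have key : MonotoneOn (fun y : ℝ => Real.log y - 2*(y-1)/(y+1)) (Set.Ici 1) := by
    have hd : ∀ x : ℝ, 0 < x → HasDerivAt (fun y : ℝ => Real.log y - 2*(y-1)/(y+1))
        (x⁻¹ - (2*(x+1) - 2*(x-1)*1)/(x+1)^2) x := by
      intro x hx
      have h1 : HasDerivAt (fun y : ℝ => 2*(y-1)) 2 x := by
        simpa using ((hasDerivAt_id x).sub_const 1).const_mul 2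
      have h2 : HasDerivAt (fun y : ℝ => y+1) 1 x := (hasDerivAt_id x).add_const 1
      exact (Real.hasDerivAt_log hx.ne').sub (h1.div h2 (by positivity))
    apply monotoneOn_of_deriv_nonneg (convex_Ici 1)
    · intro x hx
      exact ((hd x (lt_of_lt_of_le one_pos hx)).continuousAt).continuousWithinAt
    · rw [interior_Ici]
      intro x hx
      exact ((hd x (lt_trans one_pos hx)).differentiableAt).differentiableWithinAt
    · rw [interior_Ici]
      intro x hx
      have hx0 : (0:ℝ) < x := lt_trans one_pos hx
      rw [(hd x hx0).deriv]
      have h3 : (2*(x+1) - 2*(x-1)*1)/(x+1)^2 ≤ x⁻¹ := by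
        rw [div_le_iff₀ (by positivity), inv_eq_one_div, div_mul_eq_mul_div,
          le_div_iff₀ hx0]
        nlinarith [sq_nonneg (x-1)]
      linarith
  have h := key (Set.self_mem_Ici) (Set.mem_Ici.mpr ht) ht
  simp only [Real.log_one] at h
  norm_num at h
  linarith

/-- Pointwise Pinsker-type inequality for entries of probability vectors. -/
lemma pinsker_pt {p q : ℝ} (hp0 : 0 ≤ p) (hp1 : p ≤ 1) (hq0 : 0 < q) (hq1 : q ≤ 1) :
    (p - q)^2 / 2 ≤ p * Real.log (p / q) + q - p := by
  rcases eq_or_lt_of_le hp0 with h0 | hp0'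
  · rw [← h0]
    simp only [zero_mul, zero_add, sub_zero, zero_sub, neg_sq]
    nlinarith
  rcases le_or_gt p q with hle | hlt
  · -- 0 < p ≤ q
    have ht : 1 ≤ q / p := (one_le_div hp0').mpr hle
    have h1 := log_le_half_sub_inv ht
    have hlog : Real.log (p/q) = -Real.log (q/p) := by
      rw [Real.log_div hp0'.ne' hq0.ne', Real.log_div hq0.ne' hp0'.ne']; ring
    have hkey : p * Real.log (q/p) ≤ (q - p^2/q)/2 := by
      calc p * Real.log (q/p) ≤ p * ((q/p - (q/p)⁻¹)/2) :=
            mul_le_mul_of_nonneg_left h1 hp0'.le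
        _ = (q - p^2/q)/2 := by rw [inv_div]; field_simp
    have heq : -((q - p^2/q)/2) + q - p = ((p-q)^2/q)/2 := by field_simp; ring
    have h2 : (p-q)^2/2 ≤ ((p-q)^2/q)/2 := by
      have : (p-q)^2 ≤ (p-q)^2/q := by
        rw [le_div_iff₀ hq0]; nlinarith [sq_nonneg (p-q)]
      linarith
    rw [hlog]
    nlinarith
  · -- q < p
    have ht : 1 ≤ p / q := le_of_lt ((one_lt_div hq0).mpr hlt)
    have h1 := two_mul_div_le_log ht
    have hkey : 2*p*(p-q)/(p+q) ≤ p * Real.log (p/q) := by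
      calc 2*p*(p-q)/(p+q) = p * (2*(p/q-1)/(p/q+1)) := by
            have hpq : p + q ≠ 0 := by positivity
            have hq' : q ≠ 0 := hq0.ne'
            field_simp
        _ ≤ p * Real.log (p/q) := mul_le_mul_of_nonneg_left h1 hp0'.le
    have heq : 2*p*(p-q)/(p+q) + q - p = (p-q)^2/(p+q) := by
      field_simp
      ring
    have h2 : (p-q)^2/2 ≤ (p-q)^2/(p+q) := by
      apply div_le_div_of_nonneg_left (sq_nonneg _) (by linarith) (by linarith)
    nlinarith

/-! ### Auxiliary spectral lemmas (towards Weyl's inequality) -/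

open RealInnerProductSpace

variable {n : ℕ} {A : Matrix (Fin n) (Fin n) ℝ}

lemma quadForm_eq (hA : A.IsHermitian) (x : EuclideanSpace ℝ (Fin n)) :
    ⟪x, (Matrix.toEuclideanLin A) x⟫
      = ∑ k, hA.eigenvalues k * (hA.eigenvectorBasis.repr x k)^2 := by
  set b := hA.eigenvectorBasis with hb
  have hTx : (Matrix.toEuclideanLin A) x
      = ∑ k, (b.repr x k * hA.eigenvalues k) • b k := by
    conv_lhs => rw [← b.sum_repr x]
    rw [map_sum]
    refine Finset.sum_congr rfl fun k _ => ?_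
    rw [_root_.map_smul]
    have hbk : (Matrix.toEuclideanLin A) (b k) = hA.eigenvalues k • b k := by
      have := hA.mulVec_eigenvectorBasis k
      rw [Matrix.toEuclideanLin_apply]
      exact congrArg (WithLp.equiv 2 (Fin n → ℝ)).symm this
    rw [hbk, smul_smul, mul_comm]
  rw [hTx, inner_sum]
  refine Finset.sum_congr rfl fun k _ => ?_
  rw [real_inner_smul_right, real_inner_comm, ← OrthonormalBasis.repr_apply_apply]
  ring

lemma repr_eq_zero_of_notmem (hA : A.IsHermitian) {S : Finset (Fin n)}
    {x : EuclideanSpace ℝ (Fin n)}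
    (hx : x ∈ Submodule.span ℝ (⇑hA.eigenvectorBasis '' ↑S)) {k : Fin n} (hk : k ∉ S) :
    hA.eigenvectorBasis.repr x k = 0 := by
  set b := hA.eigenvectorBasis with hb
  rw [OrthonormalBasis.repr_apply_apply]
  induction hx using Submodule.span_induction with
  | mem y hy =>
      obtain ⟨j, hj, rfl⟩ := hy
      exact b.orthonormal.2 (fun h : k = j => hk (h ▸ hj))
  | zero => exact inner_zero_right _
  | add y z _ _ hy hz => rw [inner_add_right, hy, hz, add_zero]
  | smul c y _ hy => rw [real_inner_smul_right, hy, mul_zero]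

lemma cs_bound (M : Matrix (Fin n) (Fin n) ℝ) (x : Fin n → ℝ) :
    ∑ i, x i * (M *ᵥ x) i ≤ Real.sqrt (∑ i, ∑ j, M i j ^ 2) * ∑ i, x i ^ 2 := by
  have h1 := Finset.sum_mul_sq_le_sq_mul_sq Finset.univ x (fun i => (M *ᵥ x) i)
  have h2 : ∑ i, (M *ᵥ x) i ^ 2 ≤ (∑ i, ∑ j, M i j ^ 2) * ∑ j, x j ^ 2 := by
    rw [Finset.sum_mul]
    apply Finset.sum_le_sum
    intro i _
    have : (M *ᵥ x) i = ∑ j, M i j * x j := by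
      simp [Matrix.mulVec, dotProduct]
    rw [this]
    exact Finset.sum_mul_sq_le_sq_mul_sq Finset.univ (M i) x
  have hx2 : (0:ℝ) ≤ ∑ i, x i ^ 2 := Finset.sum_nonneg fun i _ => sq_nonneg _
  have key : (∑ i, x i * (M *ᵥ x) i) ^ 2
      ≤ (∑ i, ∑ j, M i j ^ 2) * (∑ i, x i ^ 2) ^ 2 := by
    calc (∑ i, x i * (M *ᵥ x) i) ^ 2
        ≤ (∑ i, x i ^ 2) * ∑ i, (M *ᵥ x) i ^ 2 := h1
      _ ≤ (∑ i, x i ^ 2) * ((∑ i, ∑ j, M i j ^ 2) * ∑ j, x j ^ 2) :=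
          mul_le_mul_of_nonneg_left h2 hx2
      _ = (∑ i, ∑ j, M i j ^ 2) * (∑ i, x i ^ 2) ^ 2 := by ring
  calc ∑ i, x i * (M *ᵥ x) i ≤ |∑ i, x i * (M *ᵥ x) i| := le_abs_self _
    _ = Real.sqrt ((∑ i, x i * (M *ᵥ x) i) ^ 2) := (Real.sqrt_sq_eq_abs _).symm
    _ ≤ Real.sqrt ((∑ i, ∑ j, M i j ^ 2) * (∑ i, x i ^ 2) ^ 2) := Real.sqrt_le_sqrt key
    _ = Real.sqrt (∑ i, ∑ j, M i j ^ 2) * ∑ i, x i ^ 2 := by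
        rw [Real.sqrt_mul (by positivity), Real.sqrt_sq hx2]

/-- One-sided Weyl inequality: `λ_i(A) - λ_i(B) ≤ ‖A - B‖_F`. -/
lemma weyl_one {A B : Matrix (Fin n) (Fin n) ℝ} (hA : A.IsHermitian) (hB : B.IsHermitian)
    {μA μB : Fin n → ℝ} (hμA : IsDecreasingEigenvalueSeq hA μA)
    (hμB : IsDecreasingEigenvalueSeq hB μB) (i : Fin n) :
    μA i - μB i ≤ Real.sqrt (∑ k, ∑ j, (A - B) k j ^ 2) := by
  obtain ⟨hAanti, eA, hEA⟩ := hμA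
  obtain ⟨hBanti, eB, hEB⟩ := hμB
  set bA := hA.eigenvectorBasis with hbA
  set bB := hB.eigenvectorBasis with hbB
  set SA : Finset (Fin n) := (Finset.Iic i).image eA with hSA
  set SB : Finset (Fin n) := (Finset.Ici i).image eB with hSB
  set VA := Submodule.span ℝ (⇑bA '' ↑SA) with hVA
  set VB := Submodule.span ℝ (⇑bB '' ↑SB) with hVB
  have hcardgen : ∀ (b : OrthonormalBasis (Fin n) ℝ (EuclideanSpace ℝ (Fin n)))
      (S : Finset (Fin n)),
      Module.finrank ℝ (Submodule.span ℝ (⇑b '' ↑S)) = S.card := by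
    intro b S
    rw [Set.image_eq_range]
    have h := finrank_span_eq_card
      ((b.orthonormal.comp ((↑) : {x // x ∈ (↑S : Set (Fin n))} → Fin n)
        Subtype.val_injective).linearIndependent)
    rw [show (Set.range fun (x : ↥(↑S : Set (Fin n))) => b ↑x)
        = Set.range (⇑b ∘ ((↑) : {x // x ∈ (↑S : Set (Fin n))} → Fin n)) from rfl, h,
      Fintype.card_congr (Equiv.subtypeEquivRight (fun x => Finset.mem_coe))]
    exact Fintype.card_coe S
  have hdimA : Module.finrank ℝ VA = (i : ℕ) + 1 := by
    rw [hVA, hcardgen, hSA, Finset.card_image_of_injective _ eA.injective, Fin.card_Iic]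
  have hdimB : Module.finrank ℝ VB = n - (i : ℕ) := by
    rw [hVB, hcardgen, hSB, Finset.card_image_of_injective _ eB.injective, Fin.card_Ici]
  have hdim_inf : 0 < Module.finrank ℝ ↥(VA ⊓ VB) := by
    have hsum := Submodule.finrank_sup_add_finrank_inf_eq VA VB
    have hle : Module.finrank ℝ ↥(VA ⊔ VB) ≤ n := by
      have h := Submodule.finrank_le (VA ⊔ VB)
      simpa [finrank_euclideanSpace] using h
    have hi : (i : ℕ) < n := i.isLt
    omega
  obtain ⟨x, hx0⟩ := Module.finrank_pos_iff_exists_ne_zero.mp hdim_inf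
  set y : EuclideanSpace ℝ (Fin n) := (x : EuclideanSpace ℝ (Fin n)) with hy
  have hy0 : y ≠ 0 := fun h => hx0 (Subtype.ext h)
  have hyA : y ∈ VA := x.2.1
  have hyB : y ∈ VB := x.2.2
  have hNpos : 0 < ⟪y, y⟫ := by
    rw [real_inner_self_eq_norm_sq]
    exact pow_pos (norm_pos_iff.mpr hy0) 2
  have hNgen : ∀ (b : OrthonormalBasis (Fin n) ℝ (EuclideanSpace ℝ (Fin n))),
      ⟪y, y⟫ = ∑ k, (b.repr y k) ^ 2 := by
    intro b
    have h1 : ‖b.repr y‖ = ‖y‖ := b.repr.norm_map y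
    rw [real_inner_self_eq_norm_sq, ← h1, EuclideanSpace.norm_eq,
      Real.sq_sqrt (by positivity)]
    simp [sq_abs]
  have hNA : ⟪y, y⟫ = ∑ k, (bA.repr y k) ^ 2 := hNgen bA
  have hNB : ⟪y, y⟫ = ∑ k, (bB.repr y k) ^ 2 := hNgen bB
  have hQA : μA i * ⟪y, y⟫ ≤ ⟪y, Matrix.toEuclideanLin A y⟫ := by
    rw [quadForm_eq hA y, hNA, Finset.mul_sum]
    apply Finset.sum_le_sum
    intro k _
    by_cases hk : k ∈ SA
    · obtain ⟨k', hk', rfl⟩ := Finset.mem_image.mp hk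
      have hle : μA i ≤ hA.eigenvalues (eA k') := by
        have h := hAanti (Finset.mem_Iic.mp hk')
        rw [hEA] at h ⊢
        exact h
      exact mul_le_mul_of_nonneg_right hle (sq_nonneg _)
    · rw [repr_eq_zero_of_notmem hA hyA hk]
      simp
  have hQB : ⟪y, Matrix.toEuclideanLin B y⟫ ≤ μB i * ⟪y, y⟫ := by
    rw [quadForm_eq hB y, hNB, Finset.mul_sum]
    apply Finset.sum_le_sum
    intro k _
    by_cases hk : k ∈ SB
    · obtain ⟨k', hk', rfl⟩ := Finset.mem_image.mp hk
      have hle : hB.eigenvalues (eB k') ≤ μB i := by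
        have h := hBanti (Finset.mem_Ici.mp hk')
        rw [hEB] at h ⊢
        exact h
      exact mul_le_mul_of_nonneg_right hle (sq_nonneg _)
    · rw [repr_eq_zero_of_notmem hB hyB hk]
      simp
  have hsub : ⟪y, Matrix.toEuclideanLin (A - B) y⟫
      = ⟪y, Matrix.toEuclideanLin A y⟫ - ⟪y, Matrix.toEuclideanLin B y⟫ := by
    rw [map_sub]
    simp [LinearMap.sub_apply, inner_sub_right]
  have hinner_sum : ∀ M : Matrix (Fin n) (Fin n) ℝ,
      ⟪y, Matrix.toEuclideanLin M y⟫ = ∑ k, y k * (M *ᵥ (fun j => y j)) k := by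
    intro M
    rw [Matrix.toEuclideanLin_apply]
    simp [PiLp.inner_apply, RCLike.inner_apply, starRingEnd_apply]
    exact Finset.sum_congr rfl fun k _ => mul_comm _ _
  have hN2 : ⟪y, y⟫ = ∑ k, (y k) ^ 2 := by
    simp [PiLp.inner_apply, RCLike.inner_apply, starRingEnd_apply, sq]
    rw [← sq, EuclideanSpace.norm_eq, Real.sq_sqrt (by positivity)]
    simp [sq]
  have hCS : ⟪y, Matrix.toEuclideanLin (A - B) y⟫
      ≤ Real.sqrt (∑ k, ∑ j, (A - B) k j ^ 2) * ⟪y, y⟫ := by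
    rw [hinner_sum (A - B), hN2]
    exact cs_bound (A - B) _
  have hfinal : (μA i - μB i) * ⟪y, y⟫
      ≤ Real.sqrt (∑ k, ∑ j, (A - B) k j ^ 2) * ⟪y, y⟫ := by
    nlinarith [hQA, hQB, hCS, hsub]
  exact le_of_mul_le_mul_right hfinal hNpos

/-- **Spectral convergence.**  For real symmetric matrices `A, B` whose rows are probability
vectors, with all entries of `B` strictly positive, the decreasingly-ordered eigenvalues
satisfy `max_i |λ_i(A) - λ_i(B)| ≤ ‖A - B‖_F ≤ sqrt(2 · Σ_i KL(A_i ‖ B_i))`, where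
`KL(p‖q) = Σ_j p_j log(p_j/q_j)` with the convention `0·log 0 = 0`. -/
theorem spectral_convergence {n : ℕ}
    (A B : Matrix (Fin n) (Fin n) ℝ) (hA : A.IsHermitian) (hB : B.IsHermitian)
    (hA0 : ∀ i j, 0 ≤ A i j) (hA1 : ∀ i, ∑ j, A i j = 1)
    (hB0 : ∀ i j, 0 < B i j) (hB1 : ∀ i, ∑ j, B i j = 1)
    (μA μB : Fin n → ℝ)
    (hμA : IsDecreasingEigenvalueSeq hA μA)
    (hμB : IsDecreasingEigenvalueSeq hB μB) :
    (∀ i, |μA i - μB i| ≤ frobNorm (A - B)) ∧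
      frobNorm (A - B) ≤ Real.sqrt (2 * ∑ i, ∑ j, A i j * Real.log (A i j / B i j)) := by
  constructor
  · intro i
    rw [abs_sub_le_iff]
    constructor
    · exact weyl_one hA hB hμA hμB i
    · have h := weyl_one hB hA hμB hμA i
      have heq : ∑ k, ∑ j, (B - A) k j ^ 2 = ∑ k, ∑ j, (A - B) k j ^ 2 := by
        refine Finset.sum_congr rfl fun k _ => Finset.sum_congr rfl fun j _ => ?_
        simp [Matrix.sub_apply]
        ring
      rw [heq] at h
      exact h
  · have hrow : ∀ i, ∑ j, (A i j - B i j) ^ 2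
        ≤ 2 * ∑ j, A i j * Real.log (A i j / B i j) := by
      intro i
      have hAle : ∀ j, A i j ≤ 1 := fun j => by
        calc A i j ≤ ∑ k, A i k :=
              Finset.single_le_sum (fun k _ => hA0 i k) (Finset.mem_univ j)
          _ = 1 := hA1 i
      have hBle : ∀ j, B i j ≤ 1 := fun j => by
        calc B i j ≤ ∑ k, B i k :=
              Finset.single_le_sum (fun k _ => (hB0 i k).le) (Finset.mem_univ j)
          _ = 1 := hB1 i
      have hsum := Finset.sum_le_sum
        (fun j (_ : j ∈ Finset.univ) => pinsker_pt (hA0 i j) (hAle j) (hB0 i j) (hBle j))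
      have e1 : ∑ j, (A i j * Real.log (A i j / B i j) + B i j - A i j)
          = ∑ j, A i j * Real.log (A i j / B i j) + (∑ j, B i j) - ∑ j, A i j := by
        rw [Finset.sum_sub_distrib, Finset.sum_add_distrib]
      have e2 : ∑ j, (A i j - B i j) ^ 2 / 2 = (∑ j, (A i j - B i j) ^ 2) / 2 := by
        rw [Finset.sum_div]
      rw [e1, hA1 i, hB1 i, e2] at hsum
      linarith
    have hmain : ∑ i, ∑ j, (A - B) i j ^ 2
        ≤ 2 * ∑ i, ∑ j, A i j * Real.log (A i j / B i j) := by
      rw [Finset.mul_sum]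
      apply Finset.sum_le_sum
      intro i _
      have : ∑ j, (A - B) i j ^ 2 = ∑ j, (A i j - B i j) ^ 2 := by
        refine Finset.sum_congr rfl fun j _ => ?_
        simp [Matrix.sub_apply]
      rw [this]
      exact hrow i
    exact Real.sqrt_le_sqrt hmain
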